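/- There exists a strictly positive function θ̃ : K → ℝ (θ̃(k) > 0 for all k ∈ K) satisfying the reduced balance equations; moreover this solution is unique up to a multiplicative constant: if θ₁ and θ₂ are two nonzero solutions of the reduced balance equations, then θ₂ = c·θ₁ for some constant c ∈ ℝ. -/

import Mathlib

open Finset

/-- `k + e_i`: add one unit in coordinate `i`. -/
def addE {J : ℕ} (k : Fin J → ℕ) (i : Fin J) : Fin J → ℕ :=
  Function.update k i (k i + 1)

/-- `k - e_i`: remove one unit in coordinate `i`. -/
def subE {J : ℕ} (k : Fin J → ℕ) (i : Fin J) : Fin J → ℕ :=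
  Function.update k i (k i - 1)

/-- The set `M(k)` of locations attaining the maximal difference `b_i - k_i`. -/
def Mset {J : ℕ} (b k : Fin J → ℕ) : Finset (Fin J) :=
  Finset.univ.filter (fun i => b i - k i = Finset.univ.sup (fun j => b j - k j))

/-- Routing probability `p_i(k)` (strict load balancing policy). -/
noncomputable def routeP {J : ℕ} (b k : Fin J → ℕ) (i : Fin J) : ℝ :=
  if i ∈ Mset b k then 1 / ((Mset b k).card : ℝ) else 0

/-- The inventory state space `K = {k : 0 ≤ k_j ≤ b_j}` as a `Finset`. -/
def Kfin {J : ℕ} (b : Fin J → ℕ) : Finset (Fin J → ℕ) :=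
  Fintype.piFinset fun j => Finset.range (b j + 1)

/-- The reduced balance equation at a single state `k`. -/
def RBEat {J : ℕ} (lam : Fin J → ℝ) (b : Fin J → ℕ) (ν : ℝ)
    (θ : (Fin J → ℕ) → ℝ) (k : Fin J → ℕ) : Prop :=
  θ k * ((∑ i ∈ Finset.univ.filter (fun i => 0 < k i), lam i)
      + ∑ i ∈ Finset.univ.filter (fun i => k i < b i), ν * routeP b k i)
    = (∑ i ∈ Finset.univ.filter (fun i => k i < b i), θ (addE k i) * lam i)
      + ∑ i ∈ Finset.univ.filter (fun i => 0 < k i),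
          θ (subE k i) * ν * routeP b (subE k i) i

/-- `θ` satisfies the reduced balance equations (at every `k ∈ K`). -/
def ReducedBalance {J : ℕ} (lam : Fin J → ℝ) (b : Fin J → ℕ) (ν : ℝ)
    (θ : (Fin J → ℕ) → ℝ) : Prop :=
  ∀ k : Fin J → ℕ, (∀ j, k j ≤ b j) → RBEat lam b ν θ k

/-- The global balance equation at a single state `(n, k)`. -/
def GBEat {J : ℕ} (lam : Fin J → ℝ) (b : Fin J → ℕ) (μ : Fin J → ℕ → ℝ) (ν : ℝ)
    (x : (Fin J → ℕ) → (Fin J → ℕ) → ℝ) (n k : Fin J → ℕ) : Prop :=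
  x n k * ((∑ i ∈ Finset.univ.filter (fun i => 0 < k i), lam i)
      + (∑ i ∈ Finset.univ.filter (fun i => 0 < n i ∧ 0 < k i), μ i (n i))
      + ∑ i ∈ Finset.univ.filter (fun i => k i < b i), ν * routeP b k i)
    = (∑ i ∈ Finset.univ.filter (fun i => 0 < n i ∧ 0 < k i), x (subE n i) k * lam i)
      + (∑ i ∈ Finset.univ.filter (fun i => k i < b i),
          x (addE n i) (addE k i) * μ i (n i + 1))
      + ∑ i ∈ Finset.univ.filter (fun i => 0 < k i),
          x n (subE k i) * ν * routeP b (subE k i) i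

/-- `x` satisfies the global balance equations (at every `(n,k) ∈ ℕ^J × K`). -/
def GlobalBalance {J : ℕ} (lam : Fin J → ℝ) (b : Fin J → ℕ) (μ : Fin J → ℕ → ℝ)
    (ν : ℝ) (x : (Fin J → ℕ) → (Fin J → ℕ) → ℝ) : Prop :=
  ∀ n k : Fin J → ℕ, (∀ j, k j ≤ b j) → GBEat lam b μ ν x n k

/-- `ξ̃_j(n) = ∏_{ℓ=1}^n λ_j / μ_j(ℓ)`. -/
noncomputable def xiT {J : ℕ} (lam : Fin J → ℝ) (μ : Fin J → ℕ → ℝ)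
    (j : Fin J) (n : ℕ) : ℝ :=
  ∏ l ∈ Finset.Icc 1 n, lam j / μ j l

/-- `ξ̃(n) = ∏_j ξ̃_j(n_j)`. -/
noncomputable def xiTvec {J : ℕ} (lam : Fin J → ℝ) (μ : Fin J → ℕ → ℝ)
    (n : Fin J → ℕ) : ℝ :=
  ∏ j, xiT lam μ j (n j)

/-- The transition rates `q_red` of the reduced (inventory-replenishment) process. -/
noncomputable def qred {J : ℕ} (lam : Fin J → ℝ) (b : Fin J → ℕ) (ν : ℝ)
    (k k' : Fin J → ℕ) : ℝ :=
  (∑ i : Fin J, (if 0 < k i ∧ k' = subE k i then lam i else 0))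
    + ∑ i : Fin J, (if k i < b i ∧ k' = addE k i then ν * routeP b k i else 0)

/-- The candidate stationary measure for base stock levels all equal to one. -/
noncomputable def thetaOne {J : ℕ} (lam : Fin J → ℝ) (ν : ℝ)
    (k : Fin J → ℕ) : ℝ :=
  (∏ l ∈ Finset.range (∑ j, k j), 1 / ((J : ℝ) - (l : ℝ)))
    * (∏ j, (1 / lam j) ^ (k j)) * (1 / ν) ^ (J - ∑ j, k j)

namespace RBEaux

variable {J : ℕ}

@[simp] lemma addE_self (k : Fin J → ℕ) (i : Fin J) : addE k i i = k i + 1 := by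
  simp [addE]

lemma addE_other (k : Fin J → ℕ) {i j : Fin J} (h : j ≠ i) : addE k i j = k j := by
  simp [addE, Function.update_of_ne h]

@[simp] lemma subE_self (k : Fin J → ℕ) (i : Fin J) : subE k i i = k i - 1 := by
  simp [subE]

lemma subE_other (k : Fin J → ℕ) {i j : Fin J} (h : j ≠ i) : subE k i j = k j := by
  simp [subE, Function.update_of_ne h]

lemma addE_ne (k : Fin J → ℕ) (i : Fin J) : addE k i ≠ k := by
  intro h
  have := congrFun h i
  simp at this

lemma subE_ne (k : Fin J → ℕ) {i : Fin J} (h : 0 < k i) : subE k i ≠ k := by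
  intro hh
  have := congrFun hh i
  simp at this
  omega

lemma subE_addE (k : Fin J → ℕ) (i : Fin J) : subE (addE k i) i = k := by
  funext j
  by_cases h : j = i
  · subst h; simp
  · rw [subE_other _ h, addE_other _ h]

lemma addE_subE (k : Fin J → ℕ) {i : Fin J} (h : 0 < k i) : addE (subE k i) i = k := by
  funext j
  by_cases hj : j = i
  · subst hj; simp; omega
  · rw [addE_other _ hj, subE_other _ hj]

lemma sum_addE (k : Fin J → ℕ) (i : Fin J) : (∑ j, addE k i j) = (∑ j, k j) + 1 := by
  rw [show (∑ j, addE k i j) = (k i + 1) + ∑ j ∈ Finset.univ \ {i}, k j from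
    Finset.sum_update_of_mem (Finset.mem_univ i) k (k i + 1)]
  rw [Finset.sum_eq_sum_sdiff_singleton_add (Finset.mem_univ i) k]
  ring

lemma sum_subE (k : Fin J → ℕ) {i : Fin J} (h : 0 < k i) :
    (∑ j, subE k i j) + 1 = ∑ j, k j := by
  rw [show (∑ j, subE k i j) = (k i - 1) + ∑ j ∈ Finset.univ \ {i}, k j from
    Finset.sum_update_of_mem (Finset.mem_univ i) k (k i - 1)]
  rw [Finset.sum_eq_sum_sdiff_singleton_add (Finset.mem_univ i) k]
  omega

lemma mem_Kfin {b k : Fin J → ℕ} : k ∈ Kfin b ↔ ∀ j, k j ≤ b j := by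
  simp [Kfin, Fintype.mem_piFinset, Nat.lt_succ_iff]

lemma addE_mem {b k : Fin J → ℕ} (hk : k ∈ Kfin b) {i : Fin J} (h : k i < b i) :
    addE k i ∈ Kfin b := by
  rw [mem_Kfin] at hk ⊢
  intro j
  by_cases hj : j = i
  · subst hj; simp; omega
  · rw [addE_other _ hj]; exact hk j

lemma subE_mem {b k : Fin J → ℕ} (hk : k ∈ Kfin b) (i : Fin J) :
    subE k i ∈ Kfin b := by
  rw [mem_Kfin] at hk ⊢
  intro j
  by_cases hj : j = i
  · subst hj; simp; have := hk j; omega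
  · rw [subE_other _ hj]; exact hk j

lemma Mset_nonempty (hJ : 0 < J) (b k : Fin J → ℕ) : (Mset b k).Nonempty := by
  have : (Finset.univ : Finset (Fin J)).Nonempty := by
    simpa [Finset.univ_nonempty_iff] using Fin.pos_iff_nonempty.mp hJ
  obtain ⟨i, _, hi⟩ := Finset.exists_mem_eq_sup Finset.univ this (fun j => b j - k j)
  exact ⟨i, by simp [Mset, hi.symm]⟩

lemma routeP_nonneg (b k : Fin J → ℕ) (i : Fin J) : 0 ≤ routeP b k i := by
  unfold routeP
  split
  · positivity
  · exact le_refl 0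

lemma routeP_pos {b k : Fin J → ℕ} {i : Fin J} (hi : i ∈ Mset b k) :
    0 < routeP b k i := by
  have hc : 0 < (Mset b k).card := Finset.card_pos.mpr ⟨i, hi⟩
  unfold routeP
  rw [if_pos hi]
  positivity

lemma sum_routeP (hJ : 0 < J) (b k : Fin J → ℕ) : ∑ i, routeP b k i = 1 := by
  have hne := Mset_nonempty hJ b k
  have hc : 0 < (Mset b k).card := Finset.card_pos.mpr hne
  unfold routeP
  rw [Finset.sum_ite_mem, Finset.univ_inter, Finset.sum_const, nsmul_eq_mul]
  field_simp

lemma Mset_lt {b k : Fin J → ℕ} (hk : ∀ j, k j ≤ b j) (hne : k ≠ b)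
    {i : Fin J} (hi : i ∈ Mset b k) : k i < b i := by
  obtain ⟨j, hj⟩ : ∃ j, k j < b j := by
    by_contra h
    push_neg at h
    exact hne (funext fun j => le_antisymm (hk j) (h j))
  have hsup : 0 < Finset.univ.sup (fun j => b j - k j) := by
    have : b j - k j ≤ Finset.univ.sup (fun j => b j - k j) :=
      Finset.le_sup (f := fun j => b j - k j) (Finset.mem_univ j)
    omega
  simp only [Mset, Finset.mem_filter] at hi
  omega

end RBEaux
namespace RBEaux

variable {J : ℕ}

/-- State space as a subtype. -/
abbrev St (b : Fin J → ℕ) := {x : Fin J → ℕ // x ∈ Kfin b}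

/-- Total out-rate at state `k`. -/
noncomputable def Dk (lam : Fin J → ℝ) (b : Fin J → ℕ) (ν : ℝ) (k : Fin J → ℕ) : ℝ :=
  (∑ i ∈ Finset.univ.filter (fun i => 0 < k i), lam i)
    + ∑ i ∈ Finset.univ.filter (fun i => k i < b i), ν * routeP b k i

/-- Uniformization constant. -/
noncomputable def Lam (lam : Fin J → ℝ) (ν : ℝ) : ℝ := (∑ i, lam i) + ν

lemma cond1 {b k k' : Fin J → ℕ} (hk' : k' ∈ Kfin b) (i : Fin J) :
    (0 < k' i ∧ k = subE k' i) ↔ (k i < b i ∧ k' = addE k i) := by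
  constructor
  · rintro ⟨h1, h2⟩
    have hki : k i = k' i - 1 := by rw [h2]; simp
    have hk'b := mem_Kfin.mp hk' i
    subst h2
    exact ⟨by omega, (addE_subE k' h1).symm⟩
  · rintro ⟨h1, h2⟩
    subst h2
    exact ⟨by simp, (subE_addE k i).symm⟩

lemma cond2 {b k k' : Fin J → ℕ} (hk : k ∈ Kfin b) (i : Fin J) :
    (k' i < b i ∧ k = addE k' i) ↔ (0 < k i ∧ k' = subE k i) := by
  constructor
  · rintro ⟨h1, h2⟩
    have hki : k i = k' i + 1 := by rw [h2]; simp
    subst h2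
    exact ⟨by omega, (subE_addE k' i).symm⟩
  · rintro ⟨h1, h2⟩
    have hkb := mem_Kfin.mp hk i
    subst h2
    refine ⟨by simp; omega, (addE_subE k h1).symm⟩

lemma sum_qred_out (lam : Fin J → ℝ) {b : Fin J → ℕ} (ν : ℝ) {k : Fin J → ℕ}
    (hk : k ∈ Kfin b) :
    ∑ k' ∈ Kfin b, qred lam b ν k k' = Dk lam b ν k := by
  unfold qred Dk
  rw [Finset.sum_add_distrib]
  congr 1
  · rw [Finset.sum_comm]
    rw [Finset.sum_congr rfl (fun i _ => ?_), Finset.sum_filter]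
    by_cases h : 0 < k i
    · simp only [h, true_and]
      rw [Finset.sum_ite_eq' (Kfin b) (subE k i) (fun _ => lam i), if_pos (subE_mem hk i)]
      simp
    · simp [h]
  · rw [Finset.sum_comm]
    rw [Finset.sum_congr rfl (fun i _ => ?_), Finset.sum_filter]
    by_cases h : k i < b i
    · simp only [h, true_and]
      rw [Finset.sum_ite_eq' (Kfin b) (addE k i) (fun _ => ν * routeP b k i),
        if_pos (addE_mem hk h)]
      simp
    · simp [h]

lemma sum_qred_in (lam : Fin J → ℝ) {b : Fin J → ℕ} (ν : ℝ)
    (θ : (Fin J → ℕ) → ℝ) {k : Fin J → ℕ} (hk : k ∈ Kfin b) :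
    ∑ k' ∈ Kfin b, θ k' * qred lam b ν k' k
      = (∑ i ∈ Finset.univ.filter (fun i => k i < b i), θ (addE k i) * lam i)
        + ∑ i ∈ Finset.univ.filter (fun i => 0 < k i),
            θ (subE k i) * ν * routeP b (subE k i) i := by
  unfold qred
  simp only [mul_add, Finset.mul_sum]
  rw [Finset.sum_add_distrib]
  congr 1
  · rw [Finset.sum_comm]
    rw [Finset.sum_congr rfl (fun i _ => ?_), Finset.sum_filter]
    by_cases h : k i < b i
    · simp only [h, if_true]
      rw [Finset.sum_congr rfl (fun k' hk' => ?_)]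
      · rw [Finset.sum_ite_eq' (Kfin b) (addE k i) (fun k' => θ k' * lam i),
          if_pos (addE_mem hk h)]
      · by_cases hc : k' = addE k i
        · rw [if_pos hc, mul_ite, mul_zero,
            if_pos (((cond1 (k := k) hk' i).mpr ⟨h, hc⟩))]
        · rw [if_neg hc, mul_ite, mul_zero, if_neg]
          intro hcc
          exact hc ((cond1 (k := k) hk' i).mp hcc).2
    · simp only [h, if_false]
      rw [Finset.sum_eq_zero]
      intro k' hk'
      rw [mul_ite, mul_zero, if_neg]
      intro hcc
      exact h ((cond1 (k := k) hk' i).mp hcc).1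
  · rw [Finset.sum_comm]
    rw [Finset.sum_congr rfl (fun i _ => ?_), Finset.sum_filter]
    by_cases h : 0 < k i
    · simp only [h, if_true]
      rw [Finset.sum_congr rfl (fun k' hk' => ?_)]
      · rw [Finset.sum_ite_eq' (Kfin b) (subE k i)
          (fun k' => θ k' * ν * routeP b k' i), if_pos (subE_mem hk i)]
      · by_cases hc : k' = subE k i
        · rw [if_pos hc, mul_ite, mul_zero, if_pos ((cond2 hk i).mpr ⟨h, hc⟩), hc,
            mul_assoc]
        · rw [if_neg hc, mul_ite, mul_zero, if_neg]
          intro hcc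
          exact hc ((cond2 hk i).mp hcc).2
    · simp only [h, if_false]
      rw [Finset.sum_eq_zero]
      intro k' hk'
      rw [mul_ite, mul_zero, if_neg]
      intro hcc
      exact h ((cond2 hk i).mp hcc).1

end RBEaux
namespace RBEaux

variable {J : ℕ}

/-- Uniformized transition matrix on the state space. -/
noncomputable def Pm (lam : Fin J → ℝ) (b : Fin J → ℕ) (ν : ℝ) :
    Matrix (St b) (St b) ℝ :=
  fun k k' => qred lam b ν k.1 k'.1 / Lam lam ν
    + if k' = k then 1 - Dk lam b ν k.1 / Lam lam ν else 0

section Facts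

variable {lam : Fin J → ℝ} {b : Fin J → ℕ} {ν : ℝ}
variable (hJ : 0 < J) (hlam : ∀ j, 0 < lam j) (hν : 0 < ν)

include hlam hν in
lemma Lam_pos : 0 < Lam lam ν := by
  unfold Lam
  have : 0 ≤ ∑ i, lam i := Finset.sum_nonneg fun i _ => (hlam i).le
  linarith

include hlam hν in
lemma qred_nonneg (k k' : Fin J → ℕ) : 0 ≤ qred lam b ν k k' := by
  unfold qred
  refine add_nonneg (Finset.sum_nonneg fun i _ => ?_) (Finset.sum_nonneg fun i _ => ?_)
  · split
    · exact (hlam i).le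
    · exact le_refl 0
  · split
    · exact mul_nonneg hν.le (routeP_nonneg b k i)
    · exact le_refl 0

include hJ hlam hν in
lemma Dk_le_Lam (k : Fin J → ℕ) : Dk lam b ν k ≤ Lam lam ν := by
  unfold Dk Lam
  have h1 : (∑ i ∈ Finset.univ.filter (fun i => 0 < k i), lam i) ≤ ∑ i, lam i :=
    Finset.sum_le_sum_of_subset_of_nonneg (Finset.filter_subset _ _)
      (fun i _ _ => (hlam i).le)
  have h2 : (∑ i ∈ Finset.univ.filter (fun i => k i < b i), ν * routeP b k i) ≤ ν := by
    calc (∑ i ∈ Finset.univ.filter (fun i => k i < b i), ν * routeP b k i)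
        ≤ ∑ i, ν * routeP b k i :=
          Finset.sum_le_sum_of_subset_of_nonneg (Finset.filter_subset _ _)
            (fun i _ _ => mul_nonneg hν.le (routeP_nonneg b k i))
      _ = ν * ∑ i, routeP b k i := by rw [Finset.mul_sum]
      _ = ν := by rw [sum_routeP hJ]; ring
  linarith

include hJ hlam hν in
lemma Pm_nonneg (k k' : St b) : 0 ≤ Pm lam b ν k k' := by
  unfold Pm
  have hΛ := Lam_pos hlam hν
  refine add_nonneg (div_nonneg (qred_nonneg hlam hν _ _) hΛ.le) ?_
  split
  · have := Dk_le_Lam (b := b) hJ hlam hν (k.1)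
    rw [sub_nonneg, div_le_one hΛ]
    exact this
  · exact le_refl 0

include hJ hlam hν in
lemma Pm_rowsum (k : St b) : ∑ k' : St b, Pm lam b ν k k' = 1 := by
  unfold Pm
  have hΛ := Lam_pos hlam hν
  rw [Finset.sum_add_distrib]
  have e1 : (∑ k' : St b, qred lam b ν k.1 k'.1 / Lam lam ν) = Dk lam b ν k.1 / Lam lam ν := by
    rw [← Finset.sum_div]
    congr 1
    rw [Finset.sum_coe_sort (Kfin b) (fun k' => qred lam b ν k.1 k')]
    exact sum_qred_out lam ν k.2
  have e2 : (∑ k' : St b, if k' = k then 1 - Dk lam b ν k.1 / Lam lam ν else 0)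
      = 1 - Dk lam b ν k.1 / Lam lam ν := by
    rw [Finset.sum_ite_eq' Finset.univ k (fun _ => 1 - Dk lam b ν k.1 / Lam lam ν),
      if_pos (Finset.mem_univ k)]
  rw [e1, e2]
  ring

include hlam hν in
lemma vecMul_Pm (θ : (Fin J → ℕ) → ℝ) (k : St b) :
    Matrix.vecMul (fun k' : St b => θ k'.1) (Pm lam b ν) k
      = (∑ k' ∈ Kfin b, θ k' * qred lam b ν k' k.1) / Lam lam ν
        + θ k.1 * (1 - Dk lam b ν k.1 / Lam lam ν) := by
  rw [show Matrix.vecMul (fun k' : St b => θ k'.1) (Pm lam b ν) k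
      = ∑ k' : St b, θ k'.1 * Pm lam b ν k' k from rfl]
  unfold Pm
  simp only [mul_add]
  rw [Finset.sum_add_distrib]
  congr 1
  · calc (∑ x : St b, θ x.1 * (qred lam b ν x.1 k.1 / Lam lam ν))
        = ∑ x : St b, (θ x.1 * qred lam b ν x.1 k.1) / Lam lam ν :=
          Finset.sum_congr rfl fun x _ => (mul_div_assoc _ _ _).symm
      _ = (∑ x : St b, θ x.1 * qred lam b ν x.1 k.1) / Lam lam ν :=
          (Finset.sum_div _ _ _).symm
      _ = (∑ k' ∈ Kfin b, θ k' * qred lam b ν k' k.1) / Lam lam ν := by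
          rw [Finset.sum_coe_sort (Kfin b) (fun k' => θ k' * qred lam b ν k' k.1)]
  · have : ∀ k' : St b, θ k'.1 * (if k = k' then 1 - Dk lam b ν k'.1 / Lam lam ν else 0)
        = if k' = k then θ k'.1 * (1 - Dk lam b ν k'.1 / Lam lam ν) else 0 := by
      intro k'
      rw [mul_ite, mul_zero]
      congr 1
      · simp [eq_comm]
    rw [Finset.sum_congr rfl fun k' _ => this k']
    rw [Finset.sum_ite_eq' Finset.univ k
      (fun k' => θ k'.1 * (1 - Dk lam b ν k'.1 / Lam lam ν)), if_pos (Finset.mem_univ k)]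

include hlam hν in
lemma fixed_iff_RBEat (θ : (Fin J → ℕ) → ℝ) (k : St b) :
    Matrix.vecMul (fun k' : St b => θ k'.1) (Pm lam b ν) k = θ k.1
      ↔ RBEat lam b ν θ k.1 := by
  have hΛ := Lam_pos hlam hν
  rw [vecMul_Pm hlam hν θ k, sum_qred_in lam ν θ k.2]
  unfold RBEat
  rw [show ((∑ i ∈ Finset.univ.filter (fun i => 0 < k.1 i), lam i)
      + ∑ i ∈ Finset.univ.filter (fun i => k.1 i < b i), ν * routeP b k.1 i)
      = Dk lam b ν k.1 from rfl]
  set X := (∑ i ∈ Finset.univ.filter (fun i => k.1 i < b i), θ (addE k.1 i) * lam i)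
      + ∑ i ∈ Finset.univ.filter (fun i => 0 < k.1 i),
          θ (subE k.1 i) * ν * routeP b (subE k.1 i) i with hX
  constructor
  · intro h
    field_simp at h
    linarith
  · intro h
    rw [← h]
    field_simp
    ring

end Facts

end RBEaux
namespace RBEaux

section Powers

variable {J : ℕ} {lam : Fin J → ℝ} {b : Fin J → ℕ} {ν : ℝ}
variable (hJ : 0 < J) (hlam : ∀ j, 0 < lam j) (hν : 0 < ν)

/-- the full state `b` as an element of `St b` -/
def bSt (b : Fin J → ℕ) : St b := ⟨b, mem_Kfin.mpr fun j => le_refl _⟩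

include hJ hlam hν in
lemma pow_nonneg_entry : ∀ n, ∀ k k' : St b, 0 ≤ (Pm lam b ν ^ n) k k' := by
  intro n
  induction n with
  | zero =>
    intro k k'
    simp only [pow_zero, Matrix.one_apply]
    split <;> norm_num
  | succ n ih =>
    intro k k'
    rw [pow_succ, Matrix.mul_apply]
    exact Finset.sum_nonneg fun m _ =>
      mul_nonneg (ih k m) (Pm_nonneg hJ hlam hν m k')

include hJ hlam hν in
lemma pow_add_entry_le (a c : ℕ) (k m k' : St b) :
    (Pm lam b ν ^ a) k m * (Pm lam b ν ^ c) m k' ≤ (Pm lam b ν ^ (a + c)) k k' := by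
  rw [pow_add, Matrix.mul_apply]
  exact Finset.single_le_sum
    (f := fun m => (Pm lam b ν ^ a) k m * (Pm lam b ν ^ c) m k')
    (fun m _ => mul_nonneg (pow_nonneg_entry hJ hlam hν a k m)
      (pow_nonneg_entry hJ hlam hν c m k')) (Finset.mem_univ m)

include hJ hlam hν in
lemma Pm_pos_up {k : St b} {i : Fin J} (hi : i ∈ Mset b k.1) (hib : k.1 i < b i) :
    0 < Pm lam b ν k ⟨addE k.1 i, addE_mem k.2 hib⟩ := by
  have hΛ := Lam_pos hlam hν
  have hne : (⟨addE k.1 i, addE_mem k.2 hib⟩ : St b) ≠ k := by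
    intro h
    exact addE_ne k.1 i (congrArg Subtype.val h)
  unfold Pm
  rw [if_neg hne, add_zero]
  apply div_pos _ hΛ
  unfold qred
  have h1 : (0:ℝ) ≤ ∑ i' : Fin J,
      (if 0 < k.1 i' ∧ addE k.1 i = subE k.1 i' then lam i' else 0) := by
    refine Finset.sum_nonneg fun i' _ => ?_
    split
    · exact (hlam i').le
    · exact le_refl 0
  have h2 : ν * routeP b k.1 i ≤ ∑ i' : Fin J,
      (if k.1 i' < b i' ∧ addE k.1 i = addE k.1 i' then ν * routeP b k.1 i' else 0) := by
    have hnn : ∀ i' ∈ Finset.univ, (0:ℝ) ≤ if k.1 i' < b i' ∧ addE k.1 i = addE k.1 i'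
        then ν * routeP b k.1 i' else 0 := by
      intro i' _
      split
      · exact mul_nonneg hν.le (routeP_nonneg b k.1 i')
      · exact le_refl 0
    have := Finset.single_le_sum
      (f := fun i' => if k.1 i' < b i' ∧ addE k.1 i = addE k.1 i'
        then ν * routeP b k.1 i' else 0)
      hnn (Finset.mem_univ i)
    simpa [hib] using this
  have h3 : 0 < ν * routeP b k.1 i := mul_pos hν (routeP_pos hi)
  linarith

include hJ hlam hν in
lemma Pm_pos_down {k : St b} {i : Fin J} (hi : 0 < k.1 i) :
    0 < Pm lam b ν k ⟨subE k.1 i, subE_mem k.2 i⟩ := by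
  have hΛ := Lam_pos hlam hν
  have hne : (⟨subE k.1 i, subE_mem k.2 i⟩ : St b) ≠ k := by
    intro h
    exact subE_ne k.1 hi (congrArg Subtype.val h)
  unfold Pm
  rw [if_neg hne, add_zero]
  apply div_pos _ hΛ
  unfold qred
  have h2 : (0:ℝ) ≤ ∑ i' : Fin J,
      (if k.1 i' < b i' ∧ subE k.1 i = addE k.1 i' then ν * routeP b k.1 i' else 0) := by
    refine Finset.sum_nonneg fun i' _ => ?_
    split
    · exact mul_nonneg hν.le (routeP_nonneg b k.1 i')
    · exact le_refl 0
  have h1 : lam i ≤ ∑ i' : Fin J,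
      (if 0 < k.1 i' ∧ subE k.1 i = subE k.1 i' then lam i' else 0) := by
    have hnn : ∀ i' ∈ Finset.univ, (0:ℝ) ≤ if 0 < k.1 i' ∧ subE k.1 i = subE k.1 i'
        then lam i' else 0 := by
      intro i' _
      split
      · exact (hlam i').le
      · exact le_refl 0
    have := Finset.single_le_sum
      (f := fun i' => if 0 < k.1 i' ∧ subE k.1 i = subE k.1 i' then lam i' else 0)
      hnn (Finset.mem_univ i)
    simpa [hi] using this
  have := hlam i
  linarith

include hJ hlam hν in
lemma Pm_pos_diag : 0 < Pm lam b ν (bSt b) (bSt b) := by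
  have hΛ := Lam_pos hlam hν
  unfold Pm
  rw [if_pos rfl]
  have hq : 0 ≤ qred lam b ν b b / Lam lam ν :=
    div_nonneg (qred_nonneg hlam hν _ _) hΛ.le
  have hD : Dk lam b ν b < Lam lam ν := by
    unfold Dk Lam
    have h1 : (∑ i ∈ Finset.univ.filter (fun i => 0 < b i), lam i) ≤ ∑ i, lam i :=
      Finset.sum_le_sum_of_subset_of_nonneg (Finset.filter_subset _ _)
        (fun i _ _ => (hlam i).le)
    have h2 : (∑ i ∈ Finset.univ.filter (fun i => b i < b i), ν * routeP b b i) = 0 := by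
      rw [Finset.filter_false_of_mem (fun i _ => lt_irrefl (b i)), Finset.sum_empty]
    linarith [h2]
  have : 0 < 1 - Dk lam b ν b / Lam lam ν := by
    rw [sub_pos, div_lt_one hΛ]
    exact hD
  show 0 < qred lam b ν b b / Lam lam ν + (1 - Dk lam b ν b / Lam lam ν)
  linarith

include hJ hlam hν in
lemma sum_lt_of_mem {k : Fin J → ℕ} (hk : k ∈ Kfin b) : (∑ j, k j) ≤ ∑ j, b j :=
  Finset.sum_le_sum fun j _ => mem_Kfin.mp hk j

include hJ hlam hν in
lemma eq_b_of_sum_eq {k : Fin J → ℕ} (hk : k ∈ Kfin b) (h : (∑ j, k j) = ∑ j, b j) :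
    k = b := by
  funext j
  exact (Finset.sum_eq_sum_iff_of_le (fun i _ => mem_Kfin.mp hk i)).mp h j (Finset.mem_univ j)

include hJ hlam hν in
lemma pow_pos_up : ∀ g : ℕ, ∀ k : St b, (∑ j, b j) - (∑ j, k.1 j) = g →
    0 < (Pm lam b ν ^ g) k (bSt b) := by
  intro g
  induction g with
  | zero =>
    intro k hg
    have hle := sum_lt_of_mem hJ hlam hν k.2
    have hsum : (∑ j, k.1 j) = ∑ j, b j := by omega
    have : k = bSt b := Subtype.ext (eq_b_of_sum_eq hJ hlam hν k.2 hsum)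
    rw [this, pow_zero, Matrix.one_apply_eq]
    norm_num
  | succ g ih =>
    intro k hg
    have hle := sum_lt_of_mem hJ hlam hν k.2
    have hne : k.1 ≠ b := by
      intro h
      rw [h] at hg
      omega
    obtain ⟨i, hi⟩ := Mset_nonempty hJ b k.1
    have hib : k.1 i < b i := Mset_lt (mem_Kfin.mp k.2) hne hi
    set m : St b := ⟨addE k.1 i, addE_mem k.2 hib⟩ with hm
    have hsum : (∑ j, m.1 j) = (∑ j, k.1 j) + 1 := sum_addE k.1 i
    have hgm : (∑ j, b j) - (∑ j, m.1 j) = g := by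
      have := sum_lt_of_mem hJ hlam hν m.2
      omega
    have h1 : 0 < Pm lam b ν k m := Pm_pos_up hJ hlam hν hi hib
    have h2 := ih m hgm
    calc (0:ℝ) < Pm lam b ν k m * (Pm lam b ν ^ g) m (bSt b) := mul_pos h1 h2
      _ ≤ (Pm lam b ν ^ (1 + g)) k (bSt b) := by
          have := pow_add_entry_le hJ hlam hν 1 g k m (bSt b)
          simpa using this
      _ = (Pm lam b ν ^ (g + 1)) k (bSt b) := by rw [Nat.add_comm]

include hJ hlam hν in
lemma pow_pos_down : ∀ g : ℕ, ∀ k : St b, (∑ j, b j) - (∑ j, k.1 j) = g →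
    0 < (Pm lam b ν ^ g) (bSt b) k := by
  intro g
  induction g with
  | zero =>
    intro k hg
    have hle := sum_lt_of_mem hJ hlam hν k.2
    have hsum : (∑ j, k.1 j) = ∑ j, b j := by omega
    have : k = bSt b := Subtype.ext (eq_b_of_sum_eq hJ hlam hν k.2 hsum)
    rw [this, pow_zero, Matrix.one_apply_eq]
    norm_num
  | succ g ih =>
    intro k hg
    have hle := sum_lt_of_mem hJ hlam hν k.2
    have hne : k.1 ≠ b := by
      intro h
      rw [h] at hg
      omega
    obtain ⟨i, hib⟩ : ∃ i, k.1 i < b i := by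
      by_contra h
      push_neg at h
      exact hne (funext fun j => le_antisymm (mem_Kfin.mp k.2 j) (h j))
    set m : St b := ⟨addE k.1 i, addE_mem k.2 hib⟩ with hm
    have hsum : (∑ j, m.1 j) = (∑ j, k.1 j) + 1 := sum_addE k.1 i
    have hgm : (∑ j, b j) - (∑ j, m.1 j) = g := by
      have := sum_lt_of_mem hJ hlam hν m.2
      omega
    have hmp : 0 < m.1 i := by simp [hm]
    have hsub : (⟨subE m.1 i, subE_mem m.2 i⟩ : St b) = k :=
      Subtype.ext (by simp [hm]; exact subE_addE k.1 i)
    have h1 : 0 < Pm lam b ν m k := by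
      have := Pm_pos_down hJ hlam hν (k := m) (i := i) hmp
      rwa [hsub] at this
    have h2 := ih m hgm
    calc (0:ℝ) < (Pm lam b ν ^ g) (bSt b) m * Pm lam b ν m k := mul_pos h2 h1
      _ ≤ (Pm lam b ν ^ (g + 1)) (bSt b) k := by
          have := pow_add_entry_le hJ hlam hν g 1 (bSt b) m k
          simpa using this

include hJ hlam hν in
lemma pow_pos_diag : ∀ n : ℕ, 0 < (Pm lam b ν ^ n) (bSt b) (bSt b) := by
  intro n
  induction n with
  | zero => rw [pow_zero, Matrix.one_apply_eq]; norm_num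
  | succ n ih =>
    calc (0:ℝ) < (Pm lam b ν ^ n) (bSt b) (bSt b) * Pm lam b ν (bSt b) (bSt b) :=
        mul_pos ih (Pm_pos_diag hJ hlam hν)
      _ ≤ (Pm lam b ν ^ (n + 1)) (bSt b) (bSt b) := by
          have := pow_add_entry_le hJ hlam hν n 1 (bSt b) (bSt b) (bSt b)
          simpa using this

include hJ hlam hν in
lemma pow_pos_all (k k' : St b) :
    0 < (Pm lam b ν ^ (2 * ∑ j, b j)) k k' := by
  set S := ∑ j, b j with hS
  have hk := sum_lt_of_mem hJ hlam hν k.2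
  have hk' := sum_lt_of_mem hJ hlam hν k'.2
  set gk := S - ∑ j, k.1 j with hgk
  set gk' := S - ∑ j, k'.1 j with hgk'
  have hdecomp : 2 * S = gk + (((∑ j, k.1 j) + (∑ j, k'.1 j)) + gk') := by omega
  have h1 : 0 < (Pm lam b ν ^ gk) k (bSt b) := pow_pos_up hJ hlam hν gk k rfl
  have h2 : 0 < (Pm lam b ν ^ ((∑ j, k.1 j) + (∑ j, k'.1 j))) (bSt b) (bSt b) :=
    pow_pos_diag hJ hlam hν _
  have h3 : 0 < (Pm lam b ν ^ gk') (bSt b) k' := pow_pos_down hJ hlam hν gk' k' rfl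
  have e1 : 0 < (Pm lam b ν ^ (((∑ j, k.1 j) + (∑ j, k'.1 j)) + gk')) (bSt b) k' :=
    lt_of_lt_of_le (mul_pos h2 h3)
      (pow_add_entry_le hJ hlam hν _ _ (bSt b) (bSt b) k')
  have e2 : 0 < (Pm lam b ν ^ (gk + (((∑ j, k.1 j) + (∑ j, k'.1 j)) + gk'))) k k' :=
    lt_of_lt_of_le (mul_pos h1 e1)
      (pow_add_entry_le hJ hlam hν _ _ k (bSt b) k')
  rwa [hdecomp]

include hJ hlam hν in
lemma pow_rowsum : ∀ n : ℕ, ∀ k : St b, ∑ k' : St b, (Pm lam b ν ^ n) k k' = 1 := by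
  intro n
  induction n with
  | zero =>
    intro k
    simp [Matrix.one_apply]
  | succ n ih =>
    intro k
    have : ∀ k' : St b, (Pm lam b ν ^ (n+1)) k k'
        = ∑ m : St b, (Pm lam b ν ^ n) k m * Pm lam b ν m k' := by
      intro k'
      rw [pow_succ, Matrix.mul_apply]
    rw [Finset.sum_congr rfl fun k' _ => this k', Finset.sum_comm]
    calc (∑ m : St b, ∑ k' : St b, (Pm lam b ν ^ n) k m * Pm lam b ν m k')
        = ∑ m : St b, (Pm lam b ν ^ n) k m * ∑ k' : St b, Pm lam b ν m k' := by
          exact Finset.sum_congr rfl fun m _ => (Finset.mul_sum _ _ _).symm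
      _ = ∑ m : St b, (Pm lam b ν ^ n) k m := by
          exact Finset.sum_congr rfl fun m _ => by rw [Pm_rowsum hJ hlam hν m, mul_one]
      _ = 1 := ih k

lemma vecMul_pow_fixed {θ : St b → ℝ} (hθ : Matrix.vecMul θ (Pm lam b ν) = θ) :
    ∀ n : ℕ, Matrix.vecMul θ (Pm lam b ν ^ n) = θ := by
  intro n
  induction n with
  | zero => simp [Matrix.vecMul_one]
  | succ n ih =>
    rw [pow_succ, ← Matrix.vecMul_vecMul, ih, hθ]

end Powers

end RBEaux
namespace RBEaux

section Main

variable {J : ℕ} {lam : Fin J → ℝ} {b : Fin J → ℕ} {ν : ℝ}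
variable (hJ : 0 < J) (hlam : ∀ j, 0 < lam j) (hν : 0 < ν)

lemma St_nonempty : Nonempty (St b) :=
  ⟨⟨fun _ => 0, mem_Kfin.mpr fun j => Nat.zero_le _⟩⟩

include hJ hlam hν in
/-- a nonnegative nonzero fixed vector is everywhere positive -/
lemma fixed_pos_of_nonneg (θ : St b → ℝ) (hθ : Matrix.vecMul θ (Pm lam b ν) = θ)
    (hnn : ∀ k, 0 ≤ θ k) (hne : θ ≠ 0) : ∀ k, 0 < θ k := by
  set N := 2 * ∑ j, b j with hN
  have hRpos : ∀ k k', 0 < (Pm lam b ν ^ N) k k' := pow_pos_all hJ hlam hν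
  have hfix : ∀ k, (∑ k' : St b, θ k' * (Pm lam b ν ^ N) k' k) = θ k := by
    intro k
    exact congrFun (vecMul_pow_fixed hθ N) k
  obtain ⟨a, ha⟩ : ∃ a, θ a ≠ 0 := by
    by_contra h
    push_neg at h
    exact hne (funext fun k => h k)
  have ha' : 0 < θ a := lt_of_le_of_ne (hnn a) (Ne.symm ha)
  intro k
  have hterm : θ a * (Pm lam b ν ^ N) a k ≤ ∑ k' : St b, θ k' * (Pm lam b ν ^ N) k' k :=
    Finset.single_le_sum
      (f := fun k' => θ k' * (Pm lam b ν ^ N) k' k)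
      (fun k' _ => mul_nonneg (hnn k') (hRpos k' k).le) (Finset.mem_univ a)
  have := mul_pos ha' (hRpos a k)
  rw [hfix k] at hterm
  linarith

include hJ hlam hν in
lemma fixed_sign (θ : St b → ℝ) (hθ : Matrix.vecMul θ (Pm lam b ν) = θ)
    (hne : θ ≠ 0) : (∀ k, 0 < θ k) ∨ (∀ k, θ k < 0) := by
  set N := 2 * ∑ j, b j with hN
  set R := Pm lam b ν ^ N with hR
  have hRpos : ∀ k k', 0 < R k k' := pow_pos_all hJ hlam hν
  have hRrow : ∀ k : St b, ∑ k' : St b, R k k' = 1 := fun k => pow_rowsum hJ hlam hν N k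
  have hfix : ∀ k, (∑ k' : St b, θ k' * R k' k) = θ k := by
    intro k
    exact congrFun (vecMul_pow_fixed hθ N) k
  have hsign : (∀ k, 0 ≤ θ k) ∨ (∀ k, θ k ≤ 0) := by
    by_contra hcon
    push_neg at hcon
    obtain ⟨⟨c, hc⟩, ⟨a, ha⟩⟩ := hcon
    have hc' : θ c < 0 := hc
    have ha' : 0 < θ a := ha
    have key : ∀ k, |θ k| < ∑ k' : St b, |θ k'| * R k' k := by
      intro k
      set f : St b → ℝ := fun k' => θ k' * R k' k with hf
      have hfc : f c < 0 := mul_neg_of_neg_of_pos hc' (hRpos c k)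
      have hfa : 0 < f a := mul_pos ha' (hRpos a k)
      have h1 : |f c| - f c ≤ ∑ k' : St b, (|f k'| - f k') :=
        Finset.single_le_sum (f := fun k' => |f k'| - f k')
          (fun k' _ => by show (0:ℝ) ≤ |f k'| - f k'; linarith [le_abs_self (f k')])
          (Finset.mem_univ c)
      have h2 : |f a| + f a ≤ ∑ k' : St b, (|f k'| + f k') :=
        Finset.single_le_sum (f := fun k' => |f k'| + f k')
          (fun k' _ => by show (0:ℝ) ≤ |f k'| + f k'; linarith [neg_abs_le (f k')])
          (Finset.mem_univ a)
      rw [Finset.sum_sub_distrib] at h1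
      rw [Finset.sum_add_distrib] at h2
      rw [hfix k] at h1 h2
      have habs : (∑ k' : St b, |f k'|) = ∑ k' : St b, |θ k'| * R k' k := by
        refine Finset.sum_congr rfl fun k' _ => ?_
        rw [hf]
        rw [abs_mul, abs_of_pos (hRpos k' k)]
      rw [habs] at h1 h2
      have hac : |f c| = -f c := abs_of_neg hfc
      have haa : |f a| = f a := abs_of_pos hfa
      rw [abs_lt]
      constructor <;> [linarith; linarith]
    have hlt : (∑ k : St b, |θ k|) < ∑ k : St b, ∑ k' : St b, |θ k'| * R k' k := by
      have : Nonempty (St b) := St_nonempty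
      exact Finset.sum_lt_sum_of_nonempty Finset.univ_nonempty fun k _ => key k
    rw [Finset.sum_comm] at hlt
    have heq : (∑ k' : St b, ∑ k : St b, |θ k'| * R k' k) = ∑ k' : St b, |θ k'| := by
      refine Finset.sum_congr rfl fun k' _ => ?_
      rw [← Finset.mul_sum, hRrow k', mul_one]
    rw [heq] at hlt
    exact lt_irrefl _ hlt
  rcases hsign with hpos | hneg
  · exact Or.inl (fixed_pos_of_nonneg hJ hlam hν θ hθ hpos hne)
  · right
    have hθ' : Matrix.vecMul (-θ) (Pm lam b ν) = -θ := by
      rw [Matrix.neg_vecMul, hθ]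
    have hne' : -θ ≠ 0 := fun h => hne (by
      have := congrArg Neg.neg h
      simpa using this)
    have := fixed_pos_of_nonneg hJ hlam hν (-θ) hθ' (fun k => by
      simpa using hneg k) hne'
    intro k
    have := this k
    simp at this
    exact this

include hJ hlam hν in
lemma exists_pos_fixed :
    ∃ θ : St b → ℝ, (∀ k, 0 < θ k) ∧ Matrix.vecMul θ (Pm lam b ν) = θ := by
  have hdet : (Pm lam b ν - 1).det = 0 := by
    rw [← Matrix.exists_mulVec_eq_zero_iff]
    refine ⟨fun _ => 1, ?_, ?_⟩
    · intro h
      have : Nonempty (St b) := St_nonempty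
      have := congrFun h (Classical.arbitrary (St b))
      norm_num at this
    · rw [Matrix.sub_mulVec, Matrix.one_mulVec]
      funext k
      have : (Pm lam b ν).mulVec (fun _ => 1) k = 1 := by
        rw [show (Pm lam b ν).mulVec (fun _ => 1) k
            = ∑ k' : St b, Pm lam b ν k k' * 1 from rfl]
        simp only [mul_one]
        exact Pm_rowsum hJ hlam hν k
      simp [this]
  have hdetT : ((Pm lam b ν - 1).transpose).det = 0 := by
    rw [Matrix.det_transpose]
    exact hdet
  obtain ⟨w, hw0, hw⟩ := Matrix.exists_mulVec_eq_zero_iff.mpr hdetT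
  have hwfix : Matrix.vecMul w (Pm lam b ν) = w := by
    rw [Matrix.transpose_sub, Matrix.transpose_one, Matrix.sub_mulVec,
      Matrix.mulVec_transpose, Matrix.one_mulVec] at hw
    have := sub_eq_zero.mp hw
    exact this
  rcases fixed_sign hJ hlam hν w hwfix hw0 with hplus | hminus
  · exact ⟨w, hplus, hwfix⟩
  · refine ⟨-w, fun k => by simpa using hminus k, ?_⟩
    rw [Matrix.neg_vecMul, hwfix]

end Main

end RBEaux
/-- existence of a strictly positive solution of the reduced balance
equations, and uniqueness up to a multiplicative constant. -/
theorem exists_unique_reduced_balance_solution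
    (J : ℕ) (hJ : 1 < J) (lam : Fin J → ℝ) (hlam : ∀ j, 0 < lam j)
    (b : Fin J → ℕ) (hb : ∀ j, 1 ≤ b j) (ν : ℝ) (hν : 0 < ν) :
    (∃ θ : (Fin J → ℕ) → ℝ,
        (∀ k, (∀ j, k j ≤ b j) → 0 < θ k) ∧ ReducedBalance lam b ν θ) ∧
      ∀ θ₁ θ₂ : (Fin J → ℕ) → ℝ,
        ReducedBalance lam b ν θ₁ → ReducedBalance lam b ν θ₂ →
        (∃ k, (∀ j, k j ≤ b j) ∧ θ₁ k ≠ 0) →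
        (∃ k, (∀ j, k j ≤ b j) ∧ θ₂ k ≠ 0) →
        ∃ c : ℝ, ∀ k, (∀ j, k j ≤ b j) → θ₂ k = c * θ₁ k := by
  classical
  have hJ0 : 0 < J := lt_trans Nat.zero_lt_one hJ
  constructor
  · -- existence
    obtain ⟨w, hwpos, hwfix⟩ :=
      RBEaux.exists_pos_fixed (lam := lam) (b := b) (ν := ν) hJ0 hlam hν
    refine ⟨fun k => if h : k ∈ Kfin b then w ⟨k, h⟩ else 1, ?_, ?_⟩
    · intro k hk
      simp only
      rw [dif_pos (RBEaux.mem_Kfin.mpr hk)]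
      exact hwpos _
    · intro k hk
      have hkm : k ∈ Kfin b := RBEaux.mem_Kfin.mpr hk
      have hfun : (fun k' : RBEaux.St b =>
          (fun k => if h : k ∈ Kfin b then w ⟨k, h⟩ else 1) k'.1) = w := by
        funext k'
        simp only
        rw [dif_pos k'.2]
      refine (RBEaux.fixed_iff_RBEat hlam hν
        (fun k => if h : k ∈ Kfin b then w ⟨k, h⟩ else 1) ⟨k, hkm⟩).mp ?_
      rw [hfun, hwfix]
      simp only
      rw [dif_pos hkm]
  · -- uniqueness
    rintro θ₁ θ₂ h₁ h₂ ⟨k₁, hk₁, hθ₁⟩ ⟨k₂, hk₂, hθ₂⟩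
    set w₁ : RBEaux.St b → ℝ := fun k => θ₁ k.1 with hw₁def
    set w₂ : RBEaux.St b → ℝ := fun k => θ₂ k.1 with hw₂def
    have hf₁ : Matrix.vecMul w₁ (RBEaux.Pm lam b ν) = w₁ :=
      funext fun k => (RBEaux.fixed_iff_RBEat hlam hν θ₁ k).mpr
        (h₁ k.1 (RBEaux.mem_Kfin.mp k.2))
    have hf₂ : Matrix.vecMul w₂ (RBEaux.Pm lam b ν) = w₂ :=
      funext fun k => (RBEaux.fixed_iff_RBEat hlam hν θ₂ k).mpr
        (h₂ k.1 (RBEaux.mem_Kfin.mp k.2))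
    have hw₁ne : w₁ ≠ 0 := by
      intro h
      exact hθ₁ (congrFun h ⟨k₁, RBEaux.mem_Kfin.mpr hk₁⟩)
    have hall : ∀ k, w₁ k ≠ 0 := by
      rcases RBEaux.fixed_sign hJ0 hlam hν w₁ hf₁ hw₁ne with h | h
      · exact fun k => (h k).ne'
      · exact fun k => (h k).ne
    set k0 : RBEaux.St b := RBEaux.bSt b with hk0
    set c : ℝ := w₂ k0 / w₁ k0 with hc
    refine ⟨c, ?_⟩
    have hφfix : Matrix.vecMul (w₂ - c • w₁) (RBEaux.Pm lam b ν) = w₂ - c • w₁ := by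
      rw [Matrix.sub_vecMul, Matrix.smul_vecMul, hf₁, hf₂]
    have hφ0 : (w₂ - c • w₁) k0 = 0 := by
      have := hall k0
      simp only [Pi.sub_apply, Pi.smul_apply, smul_eq_mul, hc]
      field_simp
      ring
    have hφ : w₂ - c • w₁ = 0 := by
      by_contra h
      rcases RBEaux.fixed_sign hJ0 hlam hν _ hφfix h with hp | hn
      · exact (hp k0).ne' hφ0
      · exact (hn k0).ne hφ0
    intro k hk
    have := congrFun hφ ⟨k, RBEaux.mem_Kfin.mpr hk⟩
    simp only [Pi.sub_apply, Pi.smul_apply, smul_eq_mul, Pi.zero_apply] at this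
    have : w₂ ⟨k, RBEaux.mem_Kfin.mpr hk⟩ = c * w₁ ⟨k, RBEaux.mem_Kfin.mpr hk⟩ := by
      linarith
    exact this
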